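/- For integers n ≥ m ≥ 1 and 0 ≤ k ≤ n, the number of squarefree monomials of degree k in n variables x_1,...,x_n that are not divisible by any of the monomials x_i x_{i+1} ⋯ x_{i+m-1} (for 1 ≤ i ≤ n-m+1) equals the coefficient of x^k in the polynomial (1 + x + ⋯ + x^{m-1})^{n-k+1}. -/

import Mathlib

/-- Coefficient of `x^j` in `(1 + x + ⋯ + x^(m-1))^N`, zero if `N < 0` or `j < 0`. -/
noncomputable def eulerCoeff (N : ℤ) (m : ℕ) (j : ℤ) : ℤ :=
  if 0 ≤ N ∧ 0 ≤ j then
    (((∑ i ∈ Finset.range m, (Polynomial.X : Polynomial ℤ) ^ i)) ^ N.toNat).coeff j.toNat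
  else 0

namespace NoConsecAux

noncomputable def P (m : ℕ) : Polynomial ℤ := ∑ i ∈ Finset.range m, Polynomial.X ^ i

noncomputable def D (m N j : ℕ) : ℤ := ((P m) ^ N).coeff j

open Classical in
noncomputable def S (m n k : ℕ) : Finset (Finset ℕ) :=
  ((Finset.Icc 1 n).powersetCard k).filter (fun A => ∀ i, ¬ Finset.Icc i (i + m - 1) ⊆ A)

lemma mem_S {m n k : ℕ} {A : Finset ℕ} :
    A ∈ S m n k ↔ A ⊆ Finset.Icc 1 n ∧ A.card = k ∧ ∀ i, ¬ Finset.Icc i (i + m - 1) ⊆ A := by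
  classical
  rw [S, Finset.mem_filter, Finset.mem_powersetCard, and_assoc]

lemma coeff_P (m i : ℕ) : (P m).coeff i = if i < m then 1 else 0 := by
  rw [P, Polynomial.finset_sum_coeff]
  simp [Polynomial.coeff_X_pow, Finset.sum_ite_eq]

lemma D_rec (m N k : ℕ) : D m (N+1) k = ∑ r ∈ Finset.range (min m (k+1)), D m N (k - r) := by
  rw [D, pow_succ', Polynomial.coeff_mul, Finset.Nat.sum_antidiagonal_eq_sum_range_succ_mk]
  have h : Finset.range (min m (k+1)) = (Finset.range (k+1)).filter (fun i => i < m) := by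
    ext i; simp [Finset.mem_filter, Finset.mem_range]; omega
  rw [h, Finset.sum_filter]
  apply Finset.sum_congr rfl
  intro i _
  rw [coeff_P]
  by_cases h : i < m <;> simp [h, D]

lemma S_self (m n : ℕ) (hm : 1 ≤ m) : ((S m n n).card : ℤ) = D m 1 n := by
  classical
  rw [D, pow_one, coeff_P, S]
  have h1 : (Finset.Icc 1 n).card = n := by simp
  have hp := Finset.powersetCard_self (Finset.Icc 1 n)
  rw [h1] at hp
  rw [hp]
  by_cases h : n < m
  · have hcond : ∀ i, ¬ Finset.Icc i (i + m - 1) ⊆ Finset.Icc 1 n := by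
      intro i hsub
      rcases Nat.eq_zero_or_pos i with hi | hi
      · have h2 : i ∈ Finset.Icc i (i + m - 1) := by simp [Finset.mem_Icc]; omega
        have := hsub h2
        simp [Finset.mem_Icc] at this
        omega
      · have h2 : i + m - 1 ∈ Finset.Icc i (i + m - 1) := by simp [Finset.mem_Icc]; omega
        have := hsub h2
        simp [Finset.mem_Icc] at this
        omega
    rw [Finset.filter_singleton, if_pos hcond, Finset.card_singleton, if_pos h]
    exact Nat.cast_one
  · rw [Finset.filter_singleton, if_neg, Finset.card_empty, if_neg h, Int.natCast_zero]
    push_neg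
    refine ⟨1, ?_⟩
    intro x hx
    simp [Finset.mem_Icc] at hx ⊢
    omega

/-- the largest non-member of `A` in `[0, n+1]` (always exists since `0 ∉ A`). -/
noncomputable def dd (n : ℕ) (A : Finset ℕ) : ℕ :=
  ((Finset.range (n+2)).filter (fun b => b ∉ A)).sup id

lemma dd_spec (n : ℕ) (A : Finset ℕ) (hA : A ⊆ Finset.Icc 1 (n+1)) :
    dd n A ∉ A ∧ dd n A ≤ n+1 ∧ ∀ b, dd n A < b → b ≤ n+1 → b ∈ A := by
  classical
  have h0 : (0:ℕ) ∈ (Finset.range (n+2)).filter (fun b => b ∉ A) := by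
    simp only [Finset.mem_filter, Finset.mem_range]
    refine ⟨by omega, fun h => ?_⟩
    have := hA h; simp at this
  obtain ⟨b, hb, hsup⟩ := Finset.exists_mem_eq_sup _ ⟨0, h0⟩ (id : ℕ → ℕ)
  simp only [Finset.mem_filter, Finset.mem_range] at hb
  have hdb : dd n A = b := hsup
  refine ⟨hdb ▸ hb.2, by omega, ?_⟩
  intro c hc hc2
  by_contra hcA
  have hcs : c ∈ (Finset.range (n+2)).filter (fun b => b ∉ A) := by
    simp only [Finset.mem_filter, Finset.mem_range]; exact ⟨by omega, hcA⟩
  have := Finset.le_sup (f := (id : ℕ → ℕ)) hcs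
  rw [← dd] at this
  simp only [id] at this
  omega

lemma dd_eq (n t : ℕ) (A : Finset ℕ) (ht1 : t ∉ A) (ht2 : t ≤ n+1)
    (ht3 : ∀ b, t < b → b ≤ n+1 → b ∈ A) : dd n A = t := by
  classical
  apply le_antisymm
  · apply Finset.sup_le
    intro b hb
    simp only [Finset.mem_filter, Finset.mem_range] at hb
    by_contra h
    simp only [id, not_le] at h
    exact hb.2 (ht3 b (by omega) (by omega))
  · refine Finset.le_sup (f := (id : ℕ → ℕ)) ?_
    simp only [Finset.mem_filter, Finset.mem_range]
    exact ⟨by omega, ht1⟩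

lemma S_rec (m n k : ℕ) (hm : 1 ≤ m) (hk : k ≤ n) :
    (S m (n+1) k).card = ∑ r ∈ Finset.range (min m (k+1)), (S m (n-r) (k-r)).card := by
  classical
  -- key facts about members
  have hfacts : ∀ A ∈ S m (n+1) k,
      Finset.Icc (dd n A + 1) (n+1) ⊆ A ∧ n+1 - dd n A ≤ k ∧ n+1 - dd n A < m := by
    intro A hA
    rw [mem_S] at hA
    obtain ⟨hsub, hcard, hcond⟩ := hA
    obtain ⟨hd1, hd2, hd3⟩ := dd_spec n A hsub
    have hrun : Finset.Icc (dd n A + 1) (n+1) ⊆ A := by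
      intro b hb
      simp only [Finset.mem_Icc] at hb
      exact hd3 b (by omega) hb.2
    have hle : n+1 - dd n A ≤ k := by
      have := Finset.card_le_card hrun
      rw [Nat.card_Icc] at this
      omega
    refine ⟨hrun, hle, ?_⟩
    by_contra hge
    push_neg at hge
    apply hcond (dd n A + 1)
    intro x hx
    simp only [Finset.mem_Icc] at hx
    exact hd3 x (by omega) (by omega)
  rw [Finset.card_eq_sum_card_fiberwise (f := fun A => n + 1 - dd n A)
    (t := Finset.range (min m (k+1)))]
  swap
  · intro A hA
    obtain ⟨_, h2, h3⟩ := hfacts A hA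
    simp only [Finset.mem_coe, Finset.mem_range, lt_min_iff]
    exact ⟨h3, by omega⟩
  apply Finset.sum_congr rfl
  intro r hr
  simp only [Finset.mem_range, lt_min_iff] at hr
  obtain ⟨hrm, hrk⟩ := hr
  have hrk' : r ≤ k := by omega
  -- facts about fiber members
  have hfib : ∀ A ∈ (S m (n+1) k).filter (fun A => n + 1 - dd n A = r),
      A ⊆ Finset.Icc 1 (n+1) ∧ A.card = k ∧ (∀ i, ¬ Finset.Icc i (i + m - 1) ⊆ A) ∧
      dd n A = n + 1 - r := by
    intro A hA
    rw [Finset.mem_filter, mem_S] at hA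
    obtain ⟨⟨h1, h2, h3⟩, h4⟩ := hA
    have hd2 := (dd_spec n A h1).2.1
    exact ⟨h1, h2, h3, by omega⟩
  have hsplit : ∀ A ∈ (S m (n+1) k).filter (fun A => n + 1 - dd n A = r),
      A.filter (· ≤ n - r) ∪ Finset.Icc (n+2-r) (n+1) = A := by
    intro A hA
    obtain ⟨h1, h2, h3, h4⟩ := hfib A hA
    have hd1 := (dd_spec n A h1).1
    have hrun := (hfacts A (Finset.mem_filter.mp hA).1).1
    rw [h4] at hd1 hrun
    ext x
    simp only [Finset.mem_union, Finset.mem_filter, Finset.mem_Icc]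
    constructor
    · intro hx
      rcases hx with ⟨hx, _⟩ | hx
      · exact hx
      · exact hrun (by simp only [Finset.mem_Icc]; omega)
    · intro hx
      have hx1 := h1 hx
      simp only [Finset.mem_Icc] at hx1
      have hxne : x ≠ n + 1 - r := fun h => hd1 (h ▸ hx)
      by_cases hle : x ≤ n - r
      · exact Or.inl ⟨hx, hle⟩
      · exact Or.inr ⟨by omega, by omega⟩
  have hdisj : ∀ B : Finset ℕ, B ⊆ Finset.Icc 1 (n-r) →
      Disjoint B (Finset.Icc (n+2-r) (n+1)) := by
    intro B hB
    rw [Finset.disjoint_left]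
    intro x hx hx2
    have := hB hx
    simp only [Finset.mem_Icc] at this hx2
    omega
  refine Finset.card_bij' (fun A _ => A.filter (· ≤ n - r))
    (fun B _ => B ∪ Finset.Icc (n+2-r) (n+1)) ?_ ?_ ?_ ?_
  · -- forward map lands in S m (n-r) (k-r)
    intro A hA
    obtain ⟨h1, h2, h3, h4⟩ := hfib A hA
    rw [mem_S]
    have hsubB : A.filter (· ≤ n - r) ⊆ Finset.Icc 1 (n-r) := by
      intro x hx
      rw [Finset.mem_filter] at hx
      have := h1 hx.1
      simp only [Finset.mem_Icc] at this ⊢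
      exact ⟨this.1, hx.2⟩
    refine ⟨hsubB, ?_, ?_⟩
    · have hcard := congrArg Finset.card (hsplit A hA)
      rw [Finset.card_union_of_disjoint (hdisj _ hsubB), Nat.card_Icc, h2] at hcard
      have hr2 : n + 1 + 1 - (n + 2 - r) = r := by omega
      rw [hr2] at hcard
      omega
    · intro i hi
      exact h3 i (hi.trans (Finset.filter_subset _ _))
  · -- backward map lands in fiber
    intro B hB
    rw [mem_S] at hB
    obtain ⟨h1, h2, h3⟩ := hB
    have ht : (n + 1 - r) ∉ B ∪ Finset.Icc (n+2-r) (n+1) := by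
      simp only [Finset.mem_union, Finset.mem_Icc, not_or]
      constructor
      · intro h
        have := h1 h
        simp only [Finset.mem_Icc] at this
        omega
      · omega
    have hmemS : B ∪ Finset.Icc (n+2-r) (n+1) ∈ S m (n+1) k := by
      rw [mem_S]
      refine ⟨?_, ?_, ?_⟩
      · intro x hx
        simp only [Finset.mem_union, Finset.mem_Icc] at hx ⊢
        rcases hx with hx | hx
        · have := h1 hx
          simp only [Finset.mem_Icc] at this
          omega
        · omega
      · rw [Finset.card_union_of_disjoint (hdisj _ h1), Nat.card_Icc, h2]
        omega
      · intro i hsub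
        by_cases hcase : i ≤ n + 1 - r ∧ n + 1 - r ≤ i + m - 1
        · exact ht (hsub (by simp only [Finset.mem_Icc]; omega))
        · push_neg at hcase
          rcases Nat.lt_or_ge (n + 1 - r) i with hlt | hge
          · -- interval entirely inside the run: too long
            have hsub2 : Finset.Icc i (i + m - 1) ⊆ Finset.Icc (n+2-r) (n+1) := by
              intro x hx
              have hx2 := hsub hx
              simp only [Finset.mem_Icc] at hx ⊢
              simp only [Finset.mem_union] at hx2
              rcases hx2 with hx2 | hx2
              · have := h1 hx2
                simp only [Finset.mem_Icc] at this
                omega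
              · simp only [Finset.mem_Icc] at hx2
                omega
            have := Finset.card_le_card hsub2
            rw [Nat.card_Icc, Nat.card_Icc] at this
            omega
          · -- interval entirely inside B
            have him : i + m - 1 < n + 1 - r := hcase hge
            apply h3 i
            intro x hx
            have hx2 := hsub hx
            simp only [Finset.mem_Icc] at hx
            simp only [Finset.mem_union] at hx2
            rcases hx2 with hx2 | hx2
            · exact hx2
            · simp only [Finset.mem_Icc] at hx2
              omega
    rw [Finset.mem_filter]
    refine ⟨hmemS, ?_⟩
    have hdd : dd n (B ∪ Finset.Icc (n+2-r) (n+1)) = n + 1 - r := by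
      apply dd_eq
      · exact ht
      · omega
      · intro b hb1 hb2
        simp only [Finset.mem_union, Finset.mem_Icc]
        right
        omega
    rw [hdd]
    omega
  · -- left inverse
    intro A hA
    exact hsplit A hA
  · -- right inverse
    intro B hB
    rw [mem_S] at hB
    obtain ⟨h1, _, _⟩ := hB
    ext x
    simp only [Finset.mem_filter, Finset.mem_union, Finset.mem_Icc]
    constructor
    · rintro ⟨hx | hx, hle⟩
      · exact hx
      · omega
    · intro hx
      have := h1 hx
      simp only [Finset.mem_Icc] at this
      exact ⟨Or.inl hx, this.2⟩

lemma main (m : ℕ) (hm : 1 ≤ m) : ∀ n k, k ≤ n → ((S m n k).card : ℤ) = D m (n - k + 1) k := by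
  intro n
  induction n using Nat.strong_induction_on with
  | _ n ih =>
    intro k hk
    rcases eq_or_lt_of_le hk with heq | hlt
    · subst heq
      rw [Nat.sub_self]
      exact S_self m k hm
    · obtain ⟨n', rfl⟩ : ∃ n', n = n' + 1 := ⟨n - 1, by omega⟩
      have hk' : k ≤ n' := by omega
      rw [S_rec m n' k hm hk', Nat.cast_sum]
      have h2 : n' + 1 - k + 1 = (n' - k + 1) + 1 := by omega
      rw [h2, D_rec]
      apply Finset.sum_congr rfl
      intro r hr
      simp only [Finset.mem_range, lt_min_iff] at hr
      rw [ih (n' - r) (by omega) (k - r) (by omega)]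
      have h3 : n' - r - (k - r) + 1 = n' - k + 1 := by omega
      rw [h3]

end NoConsecAux

/-- The number of `k`-subsets of `{1,…,n}` containing no `m` consecutive integers equals the
coefficient of `x^k` in `(1 + x + ⋯ + x^(m-1))^(n-k+1)`. -/
theorem stmt0 (n m k : ℕ) (hm : 1 ≤ m) (hmn : m ≤ n) (hk : k ≤ n) :
    (((((Finset.Icc 1 n).powersetCard k).filter
      (fun A => ∀ i ∈ Finset.Icc 1 n, ¬ (Finset.Icc i (i + m - 1) ⊆ A))).card : ℤ))
      = eulerCoeff ((n : ℤ) - k + 1) m k := by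
  classical
  have hfilter : (((Finset.Icc 1 n).powersetCard k).filter
      (fun A => ∀ i ∈ Finset.Icc 1 n, ¬ (Finset.Icc i (i + m - 1) ⊆ A))) = NoConsecAux.S m n k := by
    rw [NoConsecAux.S]
    apply Finset.filter_congr
    intro A hA
    rw [Finset.mem_powersetCard] at hA
    constructor
    · intro h i hsub
      have h1 : i ∈ Finset.Icc i (i + m - 1) := by
        simp only [Finset.mem_Icc]; omega
      have h2 : i ∈ Finset.Icc 1 n := hA.1 (hsub h1)
      exact h i h2 hsub
    · intro h i _
      exact h i
  rw [hfilter, NoConsecAux.main m hm n k hk, eulerCoeff, if_pos (by constructor <;> omega)]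
  have h1 : ((n : ℤ) - k + 1).toNat = n - k + 1 := by omega
  have h2 : ((k : ℕ) : ℤ).toNat = k := by omega
  rw [h1, h2]
  rfl
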